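/- Let Q and P be symmetric positive semidefinite n×n real matrices, σ > 0, and let g lie in the column space Ran(Q) of Q. Then there exists exactly one vector d ∈ Ran(Q) satisfying (Q + σ Q P Q) d = −g. -/

import Mathlib

open Matrix

/-- The semismooth Newton linear system `(Q + σ Q P Q) d = −g`, `d ∈ Ran(Q)`, has
exactly one solution in the column space of `Q`. -/
theorem newton_system_existsUnique {n : ℕ}
    (Q P : Matrix (Fin n) (Fin n) ℝ) (hQ : Q.PosSemidef) (hP : P.PosSemidef)
    (σ : ℝ) (hσ : 0 < σ) (g : Fin n → ℝ) (hg : ∃ y, Q.mulVec y = g) :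
    ∃! dvec : Fin n → ℝ,
      (∃ y, Q.mulVec y = dvec) ∧ (Q + σ • (Q * P * Q)).mulVec dvec = -g := by
  set M := Q + σ • (Q * P * Q) with hMdef
  have hQT : Qᵀ = Q := by simpa using hQ.1.eq
  -- M d = Q (d + σ P Q d)
  have hMd : ∀ d : Fin n → ℝ, M *ᵥ d = Q *ᵥ (d + σ • (P *ᵥ (Q *ᵥ d))) := by
    intro d
    simp [hMdef, add_mulVec, smul_mulVec, mulVec_add, mulVec_smul,
      ← mulVec_mulVec]
  -- kernel lemma
  have hker : ∀ d : Fin n → ℝ, (∃ y, Q *ᵥ y = d) → M *ᵥ d = 0 → d = 0 := by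
    rintro d ⟨y, hy⟩ h0
    have hquad : d ⬝ᵥ (M *ᵥ d) = 0 := by rw [h0, dotProduct_zero]
    have hsplit : d ⬝ᵥ (M *ᵥ d)
        = d ⬝ᵥ (Q *ᵥ d) + σ * ((Q *ᵥ d) ⬝ᵥ (P *ᵥ (Q *ᵥ d))) := by
      have h1 : d ⬝ᵥ ((Q * P * Q) *ᵥ d) = (Q *ᵥ d) ⬝ᵥ (P *ᵥ (Q *ᵥ d)) := by
        rw [← mulVec_mulVec, ← mulVec_mulVec, dotProduct_mulVec d Q,
          ← mulVec_transpose, hQT]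
      simp [hMdef, add_mulVec, smul_mulVec, dotProduct_add,
        dotProduct_smul, h1, smul_eq_mul]
    have hnn1 : 0 ≤ d ⬝ᵥ (Q *ᵥ d) := by simpa using hQ.dotProduct_mulVec_nonneg d
    have hnn2 : 0 ≤ (Q *ᵥ d) ⬝ᵥ (P *ᵥ (Q *ᵥ d)) := by simpa using hP.dotProduct_mulVec_nonneg (Q *ᵥ d)
    have hz1 : d ⬝ᵥ (Q *ᵥ d) = 0 := by
      nlinarith [hquad, hsplit, mul_nonneg hσ.le hnn2]
    have hQd : Q *ᵥ d = 0 := by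
      have := (hQ.dotProduct_mulVec_zero_iff d).mp (by simpa using hz1)
      exact this
    have hdd : d ⬝ᵥ d = 0 := by
      calc d ⬝ᵥ d = d ⬝ᵥ (Q *ᵥ y) := by rw [hy]
        _ = (Qᵀ *ᵥ d) ⬝ᵥ y := by rw [dotProduct_mulVec, ← mulVec_transpose]
        _ = 0 := by rw [hQT, hQd, zero_dotProduct]
    exact (dotProduct_self_eq_zero).mp hdd
  -- the range of Q as a submodule
  set S : Submodule ℝ (Fin n → ℝ) := LinearMap.range Q.mulVecLin with hSdef
  have hmem : ∀ x ∈ S, M.mulVecLin x ∈ S := by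
    intro x _
    exact ⟨x + σ • (P *ᵥ (Q *ᵥ x)), (hMd x).symm⟩
  set f : S →ₗ[ℝ] S := (M.mulVecLin).restrict hmem with hfdef
  have hinj : Function.Injective f := by
    rw [← LinearMap.ker_eq_bot, LinearMap.ker_eq_bot']
    intro ⟨x, hx⟩ hfx
    have hx0 : M *ᵥ x = 0 := by
      have := congrArg (Subtype.val) hfx
      simpa [hfdef, LinearMap.restrict_apply] using this
    exact Subtype.ext (hker x hx hx0)
  have hsurj : Function.Surjective f :=
    (LinearMap.injective_iff_surjective).mp hinj
  obtain ⟨y, hy⟩ := hg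
  have hgS : -g ∈ S := ⟨-y, by simp [mulVecLin_apply, mulVec_neg, hy]⟩
  obtain ⟨⟨d, hdS⟩, hd⟩ := hsurj ⟨-g, hgS⟩
  refine ⟨d, ⟨hdS, ?_⟩, ?_⟩
  · have := congrArg (Subtype.val) hd
    simpa [hfdef, LinearMap.restrict_apply] using this
  · rintro e ⟨heS, he⟩
    have hMde : M *ᵥ d = -g := by
      have := congrArg (Subtype.val) hd
      simpa [hfdef, LinearMap.restrict_apply] using this
    have hdiff : M *ᵥ (e - d) = 0 := by
      rw [mulVec_sub, he, hMde, sub_self]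
    obtain ⟨ye, hye⟩ := heS
    obtain ⟨yd, hyd⟩ := hdS
    simp only [mulVecLin_apply] at hye hyd
    have : e - d = 0 := hker (e - d) ⟨ye - yd, by rw [mulVec_sub, hye, hyd]⟩ hdiff
    exact sub_eq_zero.mp this
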